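/- Let a > 1 be a natural number coprime to 10, and define the tetration tower T(1) = a, T(b+1) = a^(T(b)). Then for every n there exists B such that for all b ≥ B, T(b+1) ≡ T(b) (mod 10^n). In other words, for each n the sequence of the last n digits of T(b) is eventually constant. -/
import Mathlib

lemma pow_mod_eq (a m : ℕ) (h : Nat.Coprime a m) {x y : ℕ}
    (hxy : x ≡ y [MOD m.totient]) : a ^ x ≡ a ^ y [MOD m] := by
  wlog hle : x ≤ y generalizing x y
  · exact (this hxy.symm (le_of_not_ge hle)).symm
  obtain ⟨t, ht⟩ : m.totient ∣ y - x := (Nat.modEq_iff_dvd' hle).mp hxy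
  have hy : y = x + m.totient * t := by omega
  subst hy
  calc a ^ x = a ^ x * 1 ^ t := by ring
    _ ≡ a ^ x * (a ^ m.totient) ^ t [MOD m] :=
        Nat.ModEq.mul_left _ (((Nat.ModEq.pow_totient h).symm).pow t)
    _ = a ^ (x + m.totient * t) := by ring

theorem stmt7 (a : ℕ) (ha : 1 < a) (hcop : Nat.Coprime a 10)
    (T : ℕ → ℕ) (hT1 : T 1 = a) (hT : ∀ b, T (b + 1) = a ^ T b) :
    ∀ n : ℕ, ∃ B : ℕ, ∀ b ≥ B, T (b + 1) ≡ T b [MOD 10 ^ n] := by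
  have ha2 : Nat.Coprime a 2 := hcop.coprime_dvd_right (by norm_num)
  have ha5 : Nat.Coprime a 5 := hcop.coprime_dvd_right (by norm_num)
  have step : ∀ m : ℕ, Nat.Coprime a m →
      (∃ B, ∀ b ≥ B, T (b + 1) ≡ T b [MOD m.totient]) →
      ∃ B, ∀ b ≥ B, T (b + 1) ≡ T b [MOD m] := by
    rintro m hc ⟨B, hB⟩
    refine ⟨B + 1, fun b hb => ?_⟩
    obtain ⟨c, rfl⟩ : ∃ c, b = c + 1 := ⟨b - 1, by omega⟩
    calc T (c + 1 + 1) = a ^ T (c + 1) := hT _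
      _ ≡ a ^ T c [MOD m] := pow_mod_eq a m hc (hB c (by omega))
      _ = T (c + 1) := (hT c).symm
  have combine : ∀ m k : ℕ, Nat.Coprime m k →
      (∃ B, ∀ b ≥ B, T (b + 1) ≡ T b [MOD m]) →
      (∃ B, ∀ b ≥ B, T (b + 1) ≡ T b [MOD k]) →
      ∃ B, ∀ b ≥ B, T (b + 1) ≡ T b [MOD m * k] := by
    rintro m k hmk ⟨B1, h1⟩ ⟨B2, h2⟩
    refine ⟨max B1 B2, fun b hb => ?_⟩
    exact (Nat.modEq_and_modEq_iff_modEq_mul hmk).mp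
      ⟨h1 b (le_trans (le_max_left _ _) hb), h2 b (le_trans (le_max_right _ _) hb)⟩
  have H2 : ∀ n : ℕ, ∃ B, ∀ b ≥ B, T (b + 1) ≡ T b [MOD 2 ^ n] := by
    intro n
    induction n with
    | zero => exact ⟨0, fun b _ => by simp [Nat.ModEq, Nat.mod_one]⟩
    | succ n ih =>
      apply step _ (ha2.pow_right _)
      rw [Nat.totient_prime_pow Nat.prime_two (by omega)]
      simpa using ih
  have H5 : ∀ n : ℕ, ∃ B, ∀ b ≥ B, T (b + 1) ≡ T b [MOD 5 ^ n] := by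
    intro n
    induction n with
    | zero => exact ⟨0, fun b _ => by simp [Nat.ModEq, Nat.mod_one]⟩
    | succ n ih =>
      apply step _ (ha5.pow_right _)
      rw [Nat.totient_prime_pow (by norm_num) (by omega)]
      have h4 : ∃ B, ∀ b ≥ B, T (b + 1) ≡ T b [MOD 4] := by
        have := H2 2
        simpa using this
      have hco : Nat.Coprime (5 ^ n) 4 :=
        (Nat.Coprime.pow_left _ (by norm_num))
      have := combine _ _ hco ih h4
      simpa using this
  intro n
  have hco : Nat.Coprime (2 ^ n) (5 ^ n) :=
    Nat.Coprime.pow n n (by norm_num)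
  have := combine _ _ hco (H2 n) (H5 n)
  have heq : (2 : ℕ) ^ n * 5 ^ n = 10 ^ n := by
    rw [← Nat.mul_pow]
  rwa [heq] at this
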